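/- Let g(s) = π^(1/2 - s) · Γ(s/2) / Γ((1-s)/2). Then for all s = σ + it with 0 < σ < 1/2 and t ≥ 12, one has |g(s)| < 1. -/

import Mathlib

open Real Filter Finset Complex Nat Topology

lemma exp_le_aux {u : ℝ} (hu : 0 ≤ u) : Real.exp u ≤ (1 + u) * Real.exp (u ^ 2) := by
  have hp : (0:ℝ) < 1 + u := by linarith
  have h2 : 1 / (1 + u) ≤ Real.exp (-(u / (1 + u))) := by
    have := Real.add_one_le_exp (-(u / (1 + u)))
    have h3 : -(u / (1 + u)) + 1 = 1 / (1 + u) := by field_simp; ring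
    linarith
  have h4 : Real.exp (u / (1 + u)) ≤ 1 + u := by
    rw [Real.exp_neg] at h2
    have := (one_div_le hp (by positivity)).mp h2
    simpa using this
  have h5 : u - u ^ 2 ≤ u / (1 + u) := by
    rw [le_div_iff₀ hp]; nlinarith
  have key : Real.exp (u - u ^ 2) ≤ 1 + u :=
    le_trans (Real.exp_le_exp.mpr h5) h4
  calc Real.exp u = Real.exp (u - u ^ 2) * Real.exp (u ^ 2) := by
        rw [← Real.exp_add]; ring_nf
    _ ≤ (1 + u) * Real.exp (u ^ 2) :=
        mul_le_mul_of_nonneg_right key (Real.exp_pos _).le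

lemma bernoulli_aux {u δ : ℝ} (hu : 0 ≤ u) (hδ : 0 ≤ δ) :
    1 + δ * u ≤ ((1 + u) * Real.exp (u ^ 2)) ^ δ := by
  have h1 : 1 + δ * u ≤ Real.exp (δ * u) := by
    have := Real.add_one_le_exp (δ * u); linarith
  have h2 : Real.exp (δ * u) = (Real.exp u) ^ δ := by
    rw [mul_comm, Real.exp_mul]
  calc 1 + δ * u ≤ Real.exp (δ * u) := h1
    _ = (Real.exp u) ^ δ := h2
    _ ≤ ((1 + u) * Real.exp (u ^ 2)) ^ δ :=
        Real.rpow_le_rpow (Real.exp_pos u).le (exp_le_aux hu) hδ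

lemma series_aux (n : ℕ) :
    ∑ j ∈ Finset.range n, (2 * (j:ℝ) + 1) ^ 2 / ((j:ℝ) ^ 2 + 36) ^ 2 ≤ 1 := by
  have hnonneg : ∀ j : ℕ, 0 ≤ (2 * (j:ℝ) + 1) ^ 2 / ((j:ℝ) ^ 2 + 36) ^ 2 :=
    fun j => by positivity
  have h12 : ∑ j ∈ Finset.range 12, (2 * (j:ℝ) + 1) ^ 2 / ((j:ℝ) ^ 2 + 36) ^ 2
      ≤ 3 / 10 := by
    norm_num [Finset.sum_range_succ]
  rcases le_or_gt n 12 with hn | hn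
  · calc ∑ j ∈ Finset.range n, (2 * (j:ℝ) + 1) ^ 2 / ((j:ℝ) ^ 2 + 36) ^ 2
        ≤ ∑ j ∈ Finset.range 12, (2 * (j:ℝ) + 1) ^ 2 / ((j:ℝ) ^ 2 + 36) ^ 2 :=
        Finset.sum_le_sum_of_subset_of_nonneg (Finset.range_subset_range.mpr hn)
          (fun i _ _ => hnonneg i)
      _ ≤ 1 := by linarith
  · have hsplit := Finset.sum_range_add_sum_Ico
      (fun j => (2 * (j:ℝ) + 1) ^ 2 / ((j:ℝ) ^ 2 + 36) ^ 2) hn.le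
    have htail : ∑ j ∈ Finset.Ico 12 n, (2 * (j:ℝ) + 1) ^ 2 / ((j:ℝ) ^ 2 + 36) ^ 2
        ≤ 5 / 11 := by
      set g : ℕ → ℝ := fun k => 5 / ((11 + k : ℕ) : ℝ) with hg
      have hterm : ∀ j ∈ Finset.Ico 12 n,
          (2 * (j:ℝ) + 1) ^ 2 / ((j:ℝ) ^ 2 + 36) ^ 2
            ≤ g (j - 12) - g (j - 12 + 1) := by
        intro j hj
        have hj12 : 12 ≤ j := (Finset.mem_Ico.mp hj).1
        have hj12' : (12:ℝ) ≤ (j:ℝ) := by exact_mod_cast hj12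
        have hcast1 : ((11 + (j - 12) : ℕ) : ℝ) = (j:ℝ) - 1 := by
          have : 11 + (j - 12) = j - 1 := by omega
          rw [this, Nat.cast_sub (by omega)]; norm_num
        have hcast2 : ((11 + (j - 12 + 1) : ℕ) : ℝ) = (j:ℝ) := by
          have : 11 + (j - 12 + 1) = j := by omega
          rw [this]
        rw [hg]
        simp only [hcast1, hcast2]
        have heq : 5 / ((j:ℝ) - 1) - 5 / (j:ℝ) = 5 / (((j:ℝ) - 1) * j) := by
          rw [div_sub_div _ _ (by linarith : (j:ℝ) - 1 ≠ 0) (by positivity : (j:ℝ) ≠ 0)]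
          ring_nf
        rw [heq, div_le_div_iff₀ (by positivity) (by nlinarith)]
        nlinarith [sq_nonneg ((j:ℝ)^2 - 3), sq_nonneg (j:ℝ)]
      calc ∑ j ∈ Finset.Ico 12 n, (2 * (j:ℝ) + 1) ^ 2 / ((j:ℝ) ^ 2 + 36) ^ 2
          ≤ ∑ j ∈ Finset.Ico 12 n, (g (j - 12) - g (j - 12 + 1)) :=
            Finset.sum_le_sum hterm
        _ = ∑ i ∈ Finset.range (n - 12), (g i - g (i + 1)) := by
            rw [Finset.sum_Ico_eq_sum_range]
            exact Finset.sum_congr rfl (fun i _ => by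
              have : 12 + i - 12 = i := by omega
              rw [this])
        _ = g 0 - g (n - 12) := Finset.sum_range_sub' g (n - 12)
        _ ≤ g 0 := by
            have : 0 ≤ g (n - 12) := by rw [hg]; positivity
            linarith
        _ = 5 / 11 := by rw [hg]; norm_num
    rw [← hsplit]; linarith

lemma telescope_aux {y : ℝ} (hy : 0 < y) (n : ℕ) :
    ∏ j ∈ Finset.range n, ((((j:ℝ) + 1) ^ 2 + y ^ 2) / ((j:ℝ) ^ 2 + y ^ 2))
      = ((n:ℝ) ^ 2 + y ^ 2) / y ^ 2 := by
  induction n with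
  | zero => simp [div_self (by positivity : (y:ℝ)^2 ≠ 0)]
  | succ m ih =>
    rw [Finset.prod_range_succ, ih]
    have h1 : ((m:ℝ) ^ 2 + y ^ 2) ≠ 0 := by positivity
    have h2 : (y:ℝ) ^ 2 ≠ 0 := by positivity
    field_simp
    push_cast
    ring

lemma prod_bound {y δ az aw : ℝ} (hy : 6 ≤ y) (hδ0 : 0 < δ) (haz : 0 < az)
    (hsum : az + aw = 1 / 2) (hdiff : aw - az = δ) (n : ℕ) :
    ∏ j ∈ Finset.range n, (((aw + j) ^ 2 + y ^ 2) / ((az + j) ^ 2 + y ^ 2))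
      ≤ (((n:ℝ) ^ 2 + y ^ 2) / y ^ 2 * Real.exp 1) ^ δ := by
  have hy0 : (0:ℝ) < y := by linarith
  set u : ℕ → ℝ := fun j => (2 * (j:ℝ) + 1) / ((j:ℝ) ^ 2 + y ^ 2) with hu
  have hu0 : ∀ j : ℕ, 0 ≤ u j := fun j => by rw [hu]; positivity
  have hQ : ∀ j ∈ Finset.range n,
      ((aw + j) ^ 2 + y ^ 2) / ((az + j) ^ 2 + y ^ 2)
        ≤ ((1 + u j) * Real.exp (u j ^ 2)) ^ δ := by
    intro j _
    refine le_trans ?_ (bernoulli_aux (hu0 j) hδ0.le)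
    have hDz : (0:ℝ) < (az + j) ^ 2 + y ^ 2 := by positivity
    have hDj : (0:ℝ) < (j:ℝ) ^ 2 + y ^ 2 := by positivity
    rw [div_le_iff₀ hDz]
    have huj : u j * ((j:ℝ) ^ 2 + y ^ 2) = 2 * (j:ℝ) + 1 := by
      rw [hu]; field_simp
    have hj0 : (0:ℝ) ≤ (j:ℝ) := Nat.cast_nonneg j
    nlinarith [mul_nonneg (mul_nonneg hδ0.le (hu0 j))
        (by nlinarith : (0:ℝ) ≤ (az + j) ^ 2 - (j:ℝ) ^ 2),
      mul_nonneg hδ0.le (hu0 j)]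
  have hQ0 : ∀ j ∈ Finset.range n,
      (0:ℝ) ≤ ((aw + j) ^ 2 + y ^ 2) / ((az + j) ^ 2 + y ^ 2) :=
    fun j _ => by positivity
  calc ∏ j ∈ Finset.range n, (((aw + j) ^ 2 + y ^ 2) / ((az + j) ^ 2 + y ^ 2))
      ≤ ∏ j ∈ Finset.range n, ((1 + u j) * Real.exp (u j ^ 2)) ^ δ :=
        Finset.prod_le_prod hQ0 hQ
    _ = (∏ j ∈ Finset.range n, ((1 + u j) * Real.exp (u j ^ 2))) ^ δ :=
        Real.finset_prod_rpow _ _ (fun j _ => by positivity) δ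
    _ = ((∏ j ∈ Finset.range n, (1 + u j))
          * Real.exp (∑ j ∈ Finset.range n, u j ^ 2)) ^ δ := by
        rw [Finset.prod_mul_distrib, Real.exp_sum]
    _ ≤ (((n:ℝ) ^ 2 + y ^ 2) / y ^ 2 * Real.exp 1) ^ δ := by
        apply Real.rpow_le_rpow (by positivity) ?_ hδ0.le
        have htel : ∏ j ∈ Finset.range n, (1 + u j) = ((n:ℝ) ^ 2 + y ^ 2) / y ^ 2 := by
          rw [← telescope_aux hy0 n]
          apply Finset.prod_congr rfl
          intro j _
          have hDj : ((j:ℝ) ^ 2 + y ^ 2) ≠ 0 := by positivity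
          rw [hu]
          field_simp
          ring
        have hsum2 : ∑ j ∈ Finset.range n, u j ^ 2 ≤ 1 := by
          refine le_trans (Finset.sum_le_sum (fun j _ => ?_)) (series_aux n)
          rw [hu]
          simp only [div_pow]
          have h36 : (36:ℝ) ≤ y ^ 2 := by nlinarith
          gcongr (2 * (j:ℝ) + 1) ^ 2 / ?_
          · nlinarith
        rw [htel]
        have h0 : (0:ℝ) ≤ ((n:ℝ) ^ 2 + y ^ 2) / y ^ 2 := by positivity
        exact mul_le_mul_of_nonneg_left (Real.exp_le_exp.mpr hsum2) h0

theorem abs_g_lt_one (s : ℂ) (hσ0 : 0 < s.re) (hσ : s.re < 1 / 2) (ht : 12 ≤ s.im) :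
    ‖(Real.pi : ℂ) ^ ((1 : ℂ) / 2 - s) * Complex.Gamma (s / 2) /
      Complex.Gamma ((1 - s) / 2)‖ < 1 := by
  set z : ℂ := s / 2 with hz
  set w : ℂ := (1 - s) / 2 with hw
  set y : ℝ := s.im / 2 with hy
  set δ : ℝ := 1 / 2 - s.re with hδ
  have h2 : (2:ℂ) = ((2:ℝ):ℂ) := by norm_num
  have hz_re : z.re = s.re / 2 := by rw [hz, h2, Complex.div_ofReal_re]
  have hz_im : z.im = y := by rw [hz, h2, Complex.div_ofReal_im, hy]
  have hw_re : w.re = (1 - s.re) / 2 := by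
    rw [hw, h2, Complex.div_ofReal_re, Complex.sub_re, Complex.one_re]
  have hw_im : w.im = -y := by
    rw [hw, h2, Complex.div_ofReal_im, Complex.sub_im, Complex.one_im, hy]
    ring
  have hy6 : (6:ℝ) ≤ y := by rw [hy]; linarith
  have hy0 : (0:ℝ) < y := by linarith
  have hδ0 : (0:ℝ) < δ := by rw [hδ]; linarith
  -- Gamma w ≠ 0 and Gamma abs values
  have hGw : Complex.Gamma w ≠ 0 := by
    apply Complex.Gamma_ne_zero
    intro m hm
    have : w.im = 0 := by rw [hm]; simp
    rw [hw_im] at this; linarith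
  have hGwabs : 0 < ‖Complex.Gamma w‖ :=
    norm_pos_iff.mpr hGw
  -- absolute value of GammaSeq
  have habsGS : ∀ (ζ : ℂ) (n : ℕ), 1 ≤ n →
      ‖Complex.GammaSeq ζ n‖
        = (n:ℝ) ^ ζ.re * (n ! : ℝ) / ∏ j ∈ Finset.range (n+1), ‖ζ + j‖ := by
    intro ζ n hn
    have hn0 : (0:ℝ) < (n:ℝ) := by exact_mod_cast hn
    rw [Complex.GammaSeq, norm_div, norm_mul, norm_prod]
    congr 2
    · rw [show ((n:ℂ)) = ((n:ℝ):ℂ) by push_cast; rfl,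
        Complex.norm_cpow_eq_rpow_re_of_pos hn0]
    · exact Complex.norm_natCast _
  -- the key per-n bound
  have hkey : ∀ n : ℕ, 1 ≤ n →
      (‖Complex.GammaSeq z n‖ / ‖Complex.GammaSeq w n‖) ^ 2
        ≤ (((n:ℝ) ^ 2)⁻¹ * ((((n:ℕ)+1:ℝ) ^ 2 + y ^ 2) / y ^ 2 * Real.exp 1)) ^ δ := by
    intro n hn
    have hn0 : (0:ℝ) < (n:ℝ) := by exact_mod_cast hn
    have hPz : 0 < ∏ j ∈ Finset.range (n+1), ‖z + j‖ := by
      apply Finset.prod_pos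
      intro j _
      apply norm_pos_iff.mpr
      intro hzero
      have : (z + (j:ℂ)).im = 0 := by rw [hzero]; simp
      simp only [Complex.add_im, Complex.natCast_im, add_zero, hz_im] at this
      linarith
    have hPw : 0 < ∏ j ∈ Finset.range (n+1), ‖w + j‖ := by
      apply Finset.prod_pos
      intro j _
      apply norm_pos_iff.mpr
      intro hzero
      have : (w + (j:ℂ)).im = 0 := by rw [hzero]; simp
      simp only [Complex.add_im, Complex.natCast_im, add_zero, hw_im] at this
      linarith
    have hfac : (0:ℝ) < (n ! : ℝ) := by exact_mod_cast Nat.factorial_pos n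
    have hratio : ‖Complex.GammaSeq z n‖ / ‖Complex.GammaSeq w n‖
        = (n:ℝ) ^ (-δ) * ((∏ j ∈ Finset.range (n+1), ‖w + j‖)
            / ∏ j ∈ Finset.range (n+1), ‖z + j‖) := by
      rw [habsGS z n hn, habsGS w n hn]
      have hexp : (n:ℝ) ^ z.re = (n:ℝ) ^ (-δ) * (n:ℝ) ^ w.re := by
        rw [← Real.rpow_add hn0]
        congr 1
        rw [hz_re, hw_re, hδ]; ring
      rw [hexp]
      have h1 : ((n:ℝ) ^ w.re) ≠ 0 := by positivity
      have h2' : ((n:ℝ) ^ (-δ)) ≠ 0 := by positivity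
      field_simp
    rw [hratio, mul_pow]
    have hprodQ : ((∏ j ∈ Finset.range (n+1), ‖w + j‖)
          / ∏ j ∈ Finset.range (n+1), ‖z + j‖) ^ 2
        = ∏ j ∈ Finset.range (n+1),
            (((w.re + j) ^ 2 + y ^ 2) / ((z.re + j) ^ 2 + y ^ 2)) := by
      rw [div_pow, ← Finset.prod_pow, ← Finset.prod_pow, ← Finset.prod_div_distrib]
      apply Finset.prod_congr rfl
      intro j _
      rw [Complex.sq_norm, Complex.sq_norm, Complex.normSq_apply, Complex.normSq_apply]
      simp only [Complex.add_re, Complex.add_im, Complex.natCast_re, Complex.natCast_im,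
        add_zero, hz_re, hz_im, hw_re, hw_im]
      rw [hz_re] at *
      ring_nf
    rw [hprodQ]
    have hbound := prod_bound hy6 hδ0 (by rw [hz_re]; linarith : 0 < z.re)
      (by rw [hz_re, hw_re]; ring : z.re + w.re = 1 / 2)
      (by rw [hz_re, hw_re, hδ]; ring : w.re - z.re = δ) (n+1)
    have hsq : ((n:ℝ) ^ (-δ)) ^ 2 = (((n:ℝ) ^ 2)⁻¹) ^ δ := by
      rw [← Real.rpow_natCast ((n:ℝ) ^ (-δ)) 2, ← Real.rpow_mul hn0.le,
        ← Real.rpow_natCast (n:ℝ) 2, Real.inv_rpow (by positivity),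
        ← Real.rpow_neg (by positivity), ← Real.rpow_mul hn0.le]
      norm_num
      congr 1
      ring
    calc ((n:ℝ) ^ (-δ)) ^ 2 * ∏ j ∈ Finset.range (n+1),
            (((w.re + j) ^ 2 + y ^ 2) / ((z.re + j) ^ 2 + y ^ 2))
        ≤ ((n:ℝ) ^ (-δ)) ^ 2 * ((((n+1:ℕ):ℝ) ^ 2 + y ^ 2) / y ^ 2 * Real.exp 1) ^ δ := by
          apply mul_le_mul_of_nonneg_left _ (by positivity)
          exact_mod_cast hbound
      _ = (((n:ℝ) ^ 2)⁻¹ * ((((n:ℕ)+1:ℝ) ^ 2 + y ^ 2) / y ^ 2 * Real.exp 1)) ^ δ := by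
          rw [hsq, ← Real.mul_rpow (by positivity) (by positivity)]
          push_cast
          ring_nf
  -- limits
  have hT1 : Tendsto (fun n => (‖Complex.GammaSeq z n‖
        / ‖Complex.GammaSeq w n‖) ^ 2) atTop
      (𝓝 ((‖Complex.Gamma z‖ / ‖Complex.Gamma w‖) ^ 2)) := by
    have h1 : Tendsto (fun n => ‖Complex.GammaSeq z n‖) atTop
        (𝓝 (‖Complex.Gamma z‖)) :=
      (continuous_norm.tendsto _).comp (Complex.GammaSeq_tendsto_Gamma z)
    have h2' : Tendsto (fun n => ‖Complex.GammaSeq w n‖) atTop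
        (𝓝 (‖Complex.Gamma w‖)) :=
      (continuous_norm.tendsto _).comp (Complex.GammaSeq_tendsto_Gamma w)
    exact (h1.div h2' hGwabs.ne').pow 2
  have hT2 : Tendsto (fun n : ℕ =>
        (((n:ℝ) ^ 2)⁻¹ * ((((n:ℕ)+1:ℝ) ^ 2 + y ^ 2) / y ^ 2 * Real.exp 1)) ^ δ) atTop
      (𝓝 ((Real.exp 1 / y ^ 2) ^ δ)) := by
    apply Tendsto.rpow_const
    · have hlim : Tendsto (fun n : ℕ =>
          ((1 + 1/(n:ℝ)) ^ 2 + y ^ 2 * (1/(n:ℝ)) ^ 2) * (Real.exp 1 / y ^ 2)) atTop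
          (𝓝 (((1 + 0) ^ 2 + y ^ 2 * 0 ^ 2) * (Real.exp 1 / y ^ 2))) := by
        apply Tendsto.mul_const
        exact ((tendsto_const_nhds.add tendsto_one_div_atTop_nhds_zero_nat).pow 2).add
          ((tendsto_one_div_atTop_nhds_zero_nat.pow 2).const_mul _)
      have heq : ((1 + (0:ℝ)) ^ 2 + y ^ 2 * 0 ^ 2) * (Real.exp 1 / y ^ 2)
          = Real.exp 1 / y ^ 2 := by norm_num
      rw [heq] at hlim
      have hev : (fun n : ℕ =>
            ((1 + 1/(n:ℝ)) ^ 2 + y ^ 2 * (1/(n:ℝ)) ^ 2) * (Real.exp 1 / y ^ 2))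
          =ᶠ[atTop] (fun n : ℕ =>
            (((n:ℝ) ^ 2)⁻¹ * ((((n:ℕ)+1:ℝ) ^ 2 + y ^ 2) / y ^ 2 * Real.exp 1))) := by
        filter_upwards [eventually_ge_atTop 1] with n hn
        have hn0 : ((n:ℝ)) ≠ 0 := by
          have : (0:ℝ) < (n:ℝ) := by exact_mod_cast hn
          exact this.ne'
        have hyne : (y:ℝ) ≠ 0 := hy0.ne'
        field_simp
      exact Tendsto.congr' hev hlim
    · exact Or.inr hδ0.le
  have hle : (‖Complex.Gamma z‖ / ‖Complex.Gamma w‖) ^ 2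
      ≤ (Real.exp 1 / y ^ 2) ^ δ := by
    apply le_of_tendsto_of_tendsto hT1 hT2
    filter_upwards [eventually_ge_atTop 1] with n hn using hkey n hn
  have hnum : (Real.exp 1 / y ^ 2) ^ δ < ((Real.pi : ℝ) ^ (-δ)) ^ 2 := by
    have hb : Real.exp 1 / y ^ 2 < (((Real.pi : ℝ)) ^ 2)⁻¹ := by
      have hy36 : (36:ℝ) ≤ y ^ 2 := by nlinarith
      have h1 : Real.exp 1 / y ^ 2 ≤ Real.exp 1 / 36 := by
        gcongr
      have h2' : Real.exp 1 / 36 < ((Real.pi : ℝ) ^ 2)⁻¹ := by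
        rw [inv_eq_one_div, div_lt_div_iff₀ (by norm_num) (by positivity)]
        nlinarith [Real.pi_lt_d2, Real.exp_one_lt_d9, Real.pi_pos, Real.exp_pos 1]
      linarith
    calc (Real.exp 1 / y ^ 2) ^ δ < ((((Real.pi : ℝ)) ^ 2)⁻¹) ^ δ :=
          Real.rpow_lt_rpow (by positivity) hb hδ0
      _ = ((Real.pi : ℝ) ^ (-δ)) ^ 2 := by
          rw [← Real.rpow_natCast ((Real.pi : ℝ) ^ (-δ)) 2, ← Real.rpow_mul Real.pi_pos.le,
            ← Real.rpow_natCast (Real.pi : ℝ) 2, ← Real.rpow_neg Real.pi_pos.le,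
            ← Real.rpow_mul Real.pi_pos.le]
          norm_num
          congr 1
          ring
  have hlt2 : (‖Complex.Gamma z‖ / ‖Complex.Gamma w‖) ^ 2
      < ((Real.pi : ℝ) ^ (-δ)) ^ 2 := lt_of_le_of_lt hle hnum
  have hratio2 : ‖Complex.Gamma z‖ / ‖Complex.Gamma w‖
      < (Real.pi : ℝ) ^ (-δ) :=
    lt_of_pow_lt_pow_left₀ 2 (by positivity) hlt2
  rw [norm_div, norm_mul]
  have habs_pow : ‖((Real.pi : ℝ) : ℂ) ^ ((1:ℂ)/2 - s)‖ = (Real.pi : ℝ) ^ δ := by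
    rw [Complex.norm_cpow_eq_rpow_re_of_pos Real.pi_pos]
    congr 1
    rw [Complex.sub_re, show ((1:ℂ)/2) = (((1:ℝ)/2 : ℝ):ℂ) by norm_num, Complex.ofReal_re,
      hδ]
  rw [habs_pow, div_lt_one hGwabs]
  calc (Real.pi : ℝ) ^ δ * ‖Complex.Gamma z‖
      < (Real.pi : ℝ) ^ δ * ((Real.pi : ℝ) ^ (-δ) * ‖Complex.Gamma w‖) := by
        apply mul_lt_mul_of_pos_left _ (by positivity)
        exact (div_lt_iff₀ hGwabs).mp hratio2
    _ = ‖Complex.Gamma w‖ := by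
        rw [← mul_assoc, ← Real.rpow_add Real.pi_pos, show δ + -δ = 0 by ring,
          Real.rpow_zero, one_mul]
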